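/- Suppose u : ℝ → ℝ is locally absolutely continuous with derivative u_x, F : ℝ → ℝ is nondecreasing, and ∫_a^b u_x(z)² dz ≤ F(b) − F(a) for all a ≤ b. Let Δx > 0 and let u_p = P_{Δx}u, F_p = P_{Δx}F be the piecewise linear projections on the grid of mesh Δx. Then ∫_a^b (u_p)_x(z)² dz ≤ F_p(b) − F_p(a) for all a ≤ b, where (u_p)_x denotes the (almost everywhere defined) derivative of u_p. -/

import Mathlib

open MeasureTheory intervalIntegral

/-- Piecewise linear projection on the grid of mesh `dx`: the unique function equal to
`f (j * dx)` at every grid point `j * dx` (`j ∈ ℤ`) and affine on each cell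
`[j * dx, (j+1) * dx]`. -/
noncomputable def plProj (dx : ℝ) (f : ℝ → ℝ) : ℝ → ℝ := fun x =>
  f ((⌊x / dx⌋ : ℝ) * dx) +
    ((x - (⌊x / dx⌋ : ℝ) * dx) / dx) *
      (f (((⌊x / dx⌋ : ℝ) + 1) * dx) - f ((⌊x / dx⌋ : ℝ) * dx))

open Set Filter

/-- Affine function agreeing with `plProj dx f` on the cell `[j*dx, (j+1)*dx]`. -/
noncomputable def affPart (dx : ℝ) (f : ℝ → ℝ) (j : ℤ) : ℝ → ℝ := fun y =>
  f ((j : ℝ) * dx) + ((y - (j : ℝ) * dx) / dx) * (f (((j : ℝ) + 1) * dx) - f ((j : ℝ) * dx))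

/-- Slope of `plProj dx f` on the cell containing `x`. -/
noncomputable def cSlope (dx : ℝ) (f : ℝ → ℝ) (x : ℝ) : ℝ :=
  (f (((⌊x / dx⌋ : ℝ) + 1) * dx) - f ((⌊x / dx⌋ : ℝ) * dx)) / dx

lemma floor_cell {dx : ℝ} (hdx : 0 < dx) {j : ℤ} {x : ℝ}
    (h1 : (j : ℝ) * dx ≤ x) (h2 : x < ((j : ℝ) + 1) * dx) : ⌊x / dx⌋ = j := by
  rw [Int.floor_eq_iff]
  constructor
  · rw [le_div_iff₀ hdx]; exact h1
  · rw [div_lt_iff₀ hdx]; push_cast; exact h2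

lemma cell_le {dx : ℝ} (hdx : 0 < dx) (x : ℝ) : ((⌊x / dx⌋ : ℝ)) * dx ≤ x := by
  rw [← le_div_iff₀ hdx]; exact Int.floor_le _

lemma lt_cell {dx : ℝ} (hdx : 0 < dx) (x : ℝ) : x < ((⌊x / dx⌋ : ℝ) + 1) * dx := by
  rw [← div_lt_iff₀ hdx]; exact Int.lt_floor_add_one _

lemma plProj_eq_affPart {dx : ℝ} (hdx : 0 < dx) (f : ℝ → ℝ) {j : ℤ} {x : ℝ}
    (hx : x ∈ Set.Icc ((j : ℝ) * dx) (((j : ℝ) + 1) * dx)) :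
    plProj dx f x = affPart dx f j x := by
  obtain ⟨h1, h2⟩ := hx
  rcases lt_or_eq_of_le h2 with h2 | h2
  · have hfl : ⌊x / dx⌋ = j := floor_cell hdx h1 h2
    simp [plProj, affPart, hfl]
  · have hfl : ⌊x / dx⌋ = j + 1 := by
      have hxd : x / dx = ((j + 1 : ℤ) : ℝ) := by
        rw [h2]; push_cast; field_simp
      rw [hxd, Int.floor_intCast]
    have hdx' : dx ≠ 0 := hdx.ne'
    simp only [plProj, affPart, hfl]
    rw [h2]
    push_cast
    field_simp
    ring

lemma affPart_hasDerivAt (dx : ℝ) (f : ℝ → ℝ) (j : ℤ) (y : ℝ) :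
    HasDerivAt (affPart dx f j) ((f (((j : ℝ) + 1) * dx) - f ((j : ℝ) * dx)) / dx) y := by
  have h1 : HasDerivAt (fun y : ℝ => (y - (j : ℝ) * dx) / dx) (1 / dx) y :=
    ((hasDerivAt_id y).sub_const _).div_const dx
  have h2 := (h1.mul_const (f (((j : ℝ) + 1) * dx) - f ((j : ℝ) * dx))).const_add
    (f ((j : ℝ) * dx))
  have e : (f (((j : ℝ) + 1) * dx) - f ((j : ℝ) * dx)) / dx =
      1 / dx * (f (((j : ℝ) + 1) * dx) - f ((j : ℝ) * dx)) := by ring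
  rw [e]; exact h2

lemma plProj_hasDerivWithinAt_right {dx : ℝ} (hdx : 0 < dx) (f : ℝ → ℝ) (x : ℝ) :
    HasDerivWithinAt (plProj dx f) (cSlope dx f x) (Set.Ioi x) x := by
  set j := ⌊x / dx⌋ with hj
  have h1 : (j : ℝ) * dx ≤ x := cell_le hdx x
  have h2 : x < ((j : ℝ) + 1) * dx := lt_cell hdx x
  refine ((affPart_hasDerivAt dx f j x).hasDerivWithinAt).congr_of_eventuallyEq ?_
    (plProj_eq_affPart hdx f ⟨h1, h2.le⟩)
  have hmem : Set.Iio (((j : ℝ) + 1) * dx) ∈ nhdsWithin x (Set.Ioi x) :=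
    nhdsWithin_le_nhds (Iio_mem_nhds h2)
  filter_upwards [hmem, self_mem_nhdsWithin] with y hy1 hy2
  exact plProj_eq_affPart hdx f ⟨h1.trans (le_of_lt hy2), le_of_lt hy1⟩

lemma plProj_hasDerivAt_nongrid {dx : ℝ} (hdx : 0 < dx) (f : ℝ → ℝ) {x : ℝ}
    (hx : ∀ j : ℤ, x ≠ (j : ℝ) * dx) :
    HasDerivAt (plProj dx f) (cSlope dx f x) x := by
  set j := ⌊x / dx⌋ with hj
  have h1 : (j : ℝ) * dx < x := lt_of_le_of_ne (cell_le hdx x) (Ne.symm (hx j))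
  have h2 : x < ((j : ℝ) + 1) * dx := lt_cell hdx x
  refine (affPart_hasDerivAt dx f j x).congr_of_eventuallyEq ?_
  filter_upwards [Ioo_mem_nhds h1 h2] with y hy
  exact plProj_eq_affPart hdx f ⟨hy.1.le, hy.2.le⟩

lemma plProj_continuous {dx : ℝ} (hdx : 0 < dx) (f : ℝ → ℝ) : Continuous (plProj dx f) := by
  rw [continuous_iff_continuousAt]
  intro x
  rw [continuousAt_iff_continuous_left_right]
  constructor
  · set j := ⌈x / dx⌉ - 1 with hj
    have h1 : (j : ℝ) * dx < x := by
      have h : (j : ℝ) < x / dx := by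
        push_cast [hj]
        have := Int.ceil_lt_add_one (x / dx)
        linarith
      exact (lt_div_iff₀ hdx).mp h
    have h2 : x ≤ ((j : ℝ) + 1) * dx := by
      have h : x / dx ≤ (j : ℝ) + 1 := by
        push_cast [hj]
        have := Int.le_ceil (x / dx)
        linarith
      exact (div_le_iff₀ hdx).mp h
    refine ((affPart_hasDerivAt dx f j x).continuousAt.continuousWithinAt).congr_of_eventuallyEq
      ?_ (plProj_eq_affPart hdx f ⟨h1.le, h2⟩)
    have hmem : Set.Ioi ((j : ℝ) * dx) ∈ nhdsWithin x (Set.Iic x) :=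
      nhdsWithin_le_nhds (Ioi_mem_nhds h1)
    filter_upwards [hmem, self_mem_nhdsWithin] with y hy1 hy2
    exact plProj_eq_affPart hdx f ⟨(le_of_lt hy1), le_trans hy2 h2⟩
  · rw [← continuousWithinAt_Ioi_iff_Ici]
    exact (plProj_hasDerivWithinAt_right hdx f x).continuousWithinAt

/-- The piecewise linear projection preserves the energy inequality:
if `∫_a^b ux² ≤ F b - F a` for all `a ≤ b`, then the projected pair satisfies
`∫_a^b (u_p)_x² ≤ F_p b - F_p a` for all `a ≤ b`, where `(u_p)_x` is the a.e. defined
derivative of `u_p = P_{Δx} u`. -/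
theorem projection_preserves_energy
    (u ux F : ℝ → ℝ)
    (hFmono : Monotone F)
    (hux_int : ∀ a b : ℝ, IntervalIntegrable ux volume a b)
    (hux2_int : ∀ a b : ℝ, IntervalIntegrable (fun z => ux z ^ 2) volume a b)
    (hFTC : ∀ a b : ℝ, a ≤ b → u b - u a = ∫ z in a..b, ux z)
    (hE : ∀ a b : ℝ, a ≤ b → (∫ z in a..b, ux z ^ 2) ≤ F b - F a)
    (dx : ℝ) (hdx : 0 < dx)
    (up' : ℝ → ℝ)
    (hup' : ∀ᵐ x ∂volume, HasDerivAt (plProj dx u) (up' x) x) :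
    ∀ a b : ℝ, a ≤ b →
      (∫ z in a..b, up' z ^ 2) ≤ plProj dx F b - plProj dx F a := by
  intro a b hab
  set su := cSlope dx u with hsu_def
  set sF := cSlope dx F with hsF_def
  -- u is continuous
  have hu_cont : Continuous u := by
    have hprim : Continuous fun x => ∫ z in (0:ℝ)..x, ux z :=
      intervalIntegral.continuous_primitive hux_int 0
    have heq : u = fun x => u 0 + ∫ z in (0:ℝ)..x, ux z := by
      funext x
      rcases le_total 0 x with h | h
      · have := hFTC 0 x h; linarith
      · have h1 := hFTC x 0 h
        have h2 : (∫ z in x..(0:ℝ), ux z) = - ∫ z in (0:ℝ)..x, ux z :=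
          intervalIntegral.integral_symm 0 x
        linarith
    rw [heq]
    exact continuous_const.add hprim
  -- measurability of the slope functions
  have hcast : Measurable fun x : ℝ => ((⌊x / dx⌋ : ℤ) : ℝ) :=
    measurable_from_top.comp (Measurable.floor (measurable_id.div_const dx))
  have hsu_meas : Measurable su := by
    rw [hsu_def]
    unfold cSlope
    exact ((hu_cont.measurable.comp ((hcast.add_const 1).mul_const dx)).sub
      (hu_cont.measurable.comp (hcast.mul_const dx))).div_const dx
  have hsF_meas : Measurable sF := by
    rw [hsF_def]
    unfold cSlope
    exact ((hFmono.measurable.comp ((hcast.add_const 1).mul_const dx)).sub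
      (hFmono.measurable.comp (hcast.mul_const dx))).div_const dx
  -- pointwise Cauchy-Schwarz bound
  have hkey : ∀ x : ℝ, su x ^ 2 ≤ sF x := by
    intro x
    set j := ⌊x / dx⌋ with hj
    set p := (j : ℝ) * dx with hp
    set q := ((j : ℝ) + 1) * dx with hq
    have hqp : q - p = dx := by rw [hp, hq]; ring
    have hpq : p ≤ q := by linarith
    set I := ∫ z in p..q, ux z with hI
    set J := ∫ z in p..q, ux z ^ 2 with hJ
    have hCS : I ^ 2 ≤ dx * J := by
      have hnn : 0 ≤ ∫ z in p..q, (ux z - I / dx) ^ 2 :=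
        intervalIntegral.integral_nonneg hpq (fun z _ => sq_nonneg _)
      have hexp : (∫ z in p..q, (ux z - I / dx) ^ 2)
          = J - 2 * (I / dx) * I + (I / dx) ^ 2 * dx := by
        have e1 : (fun z => (ux z - I / dx) ^ 2)
            = fun z => (ux z ^ 2 - (2 * (I / dx)) * ux z) + (I / dx) ^ 2 := by
          funext z; ring
        rw [e1, intervalIntegral.integral_add
          ((hux2_int p q).sub ((hux_int p q).const_mul _)) intervalIntegrable_const,
          intervalIntegral.integral_sub (hux2_int p q) ((hux_int p q).const_mul _),
          intervalIntegral.integral_const_mul, intervalIntegral.integral_const, hqp]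
        simp [smul_eq_mul]
        ring
      have h0 : 0 ≤ J - 2 * (I / dx) * I + (I / dx) ^ 2 * dx := hexp ▸ hnn
      have hIeq : I = (I / dx) * dx := by field_simp
      nlinarith [mul_nonneg hdx.le h0, sq_nonneg (I / dx)]
    have hsux : su x = I / dx := by
      have h := hFTC p q hpq
      rw [hsu_def]
      unfold cSlope
      rw [← hj, ← hp, ← hq, h]
    have hsFx : sF x = (F q - F p) / dx := by
      rw [hsF_def]; unfold cSlope; rw [← hj, ← hp, ← hq]
    have hEx : J ≤ F q - F p := hE p q hpq
    rw [hsux, hsFx, div_pow, div_le_div_iff₀ (by positivity) hdx]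
    nlinarith [hCS, hdx, hEx]
  -- up' agrees a.e. with su
  have hgrid : volume (⋃ j : ℤ, {((j : ℝ) * dx)}) = 0 :=
    measure_iUnion_null fun j => measure_singleton _
  have hae : up' =ᵐ[volume] su := by
    have hng : ∀ᵐ x ∂volume, ∀ j : ℤ, x ≠ (j : ℝ) * dx := by
      rw [ae_iff]
      refine measure_mono_null ?_ hgrid
      intro x hx
      simp only [Set.mem_setOf_eq, not_forall, not_not] at hx
      obtain ⟨j, hj⟩ := hx
      exact Set.mem_iUnion.2 ⟨j, hj⟩
    filter_upwards [hup', hng] with x hx1 hx2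
    exact hx1.unique (plProj_hasDerivAt_nongrid hdx u hx2)
  -- bounds for integrability
  set M := (F (b + dx) - F (a - dx)) / dx with hM
  have hbound : ∀ x ∈ Set.Icc a b, 0 ≤ sF x ∧ sF x ≤ M := by
    intro x hx
    set j := ⌊x / dx⌋ with hj
    have h1 : (j : ℝ) * dx ≤ x := cell_le hdx x
    have h2 : x < ((j : ℝ) + 1) * dx := lt_cell hdx x
    have he : ((j : ℝ) + 1) * dx = (j : ℝ) * dx + dx := by ring
    have hFle : F (((j : ℝ) + 1) * dx) ≤ F (b + dx) := hFmono (by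
      rw [he]; linarith [hx.2])
    have hFge : F (a - dx) ≤ F ((j : ℝ) * dx) := hFmono (by
      rw [he] at h2; linarith [hx.1])
    have hmono : F ((j : ℝ) * dx) ≤ F (((j : ℝ) + 1) * dx) := hFmono (by linarith)
    have hsFx : sF x = (F (((j : ℝ) + 1) * dx) - F ((j : ℝ) * dx)) / dx := by
      rw [hsF_def]; unfold cSlope; rw [← hj]
    constructor
    · rw [hsFx]; exact div_nonneg (by linarith) hdx.le
    · rw [hsFx, hM]
      gcongr <;> linarith
  have hIoc : Set.uIoc a b = Set.Ioc a b := Set.uIoc_of_le hab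
  have hsFint : IntervalIntegrable sF volume a b := by
    refine IntervalIntegrable.mono_fun' (_root_.intervalIntegrable_const (c := M))
      (hsF_meas.aestronglyMeasurable.restrict) ?_
    rw [hIoc]
    refine (ae_restrict_iff' measurableSet_Ioc).2 (Filter.Eventually.of_forall ?_)
    intro x hx
    have h := hbound x (Set.Ioc_subset_Icc_self hx)
    show ‖sF x‖ ≤ M
    rw [Real.norm_eq_abs, abs_of_nonneg h.1]
    exact h.2
  have hsu2int : IntervalIntegrable (fun x => su x ^ 2) volume a b := by
    refine IntervalIntegrable.mono_fun' (_root_.intervalIntegrable_const (c := M))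
      ((hsu_meas.pow_const 2).aestronglyMeasurable.restrict) ?_
    rw [hIoc]
    refine (ae_restrict_iff' measurableSet_Ioc).2 (Filter.Eventually.of_forall ?_)
    intro x hx
    have h := hbound x (Set.Ioc_subset_Icc_self hx)
    show ‖su x ^ 2‖ ≤ M
    rw [Real.norm_eq_abs, abs_of_nonneg (sq_nonneg _)]
    exact (hkey x).trans h.2
  have hFTCp : (∫ z in a..b, sF z) = plProj dx F b - plProj dx F a :=
    integral_eq_sub_of_hasDeriv_right_of_le hab ((plProj_continuous hdx F).continuousOn)
      (fun x _ => plProj_hasDerivWithinAt_right hdx F x) hsFint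
  calc (∫ z in a..b, up' z ^ 2) = ∫ z in a..b, su z ^ 2 := by
        apply intervalIntegral.integral_congr_ae
        filter_upwards [hae] with x hx _
        rw [hx]
    _ ≤ ∫ z in a..b, sF z :=
        intervalIntegral.integral_mono_on hab hsu2int hsFint (fun x _ => hkey x)
    _ = _ := hFTCp
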